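/- arXiv:2212.06620 — 4 statements merged into one kernel-verified Lean document; each statement's English description precedes it below -/
import Mathlib

section
/- Let $y, \hat{l}_1, \hat{l}_2, l_1$ be real with $\hat{l}_1 \neq \hat{l}_2$, $\hat{l}_1 > 0$, and let $w_1^* = (y - 2\hat{l}_2)/(\hat{l}_1 - \hat{l}_2)$ and $g(\hat{l}_1) = \hat{l}_1^2 + \hat{l}_1(y - 3\hat{l}_2 - 2l_1) + 2 l_1 \hat{l}_2$. Then $|w_1^*\hat{l}_1 - l_1| < |\hat{l}_1 - l_1|$ if and only if $(y - \hat{l}_1 - \hat{l}_2)\, g(\hat{l}_1) < 0$. -/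
theorem stmt_7 (y l1hat l2hat l1 : ℝ) (hne : l1hat ≠ l2hat) (hpos : l1hat > 0)
    (w1 g : ℝ) (hw : w1 = (y - 2 * l2hat) / (l1hat - l2hat))
    (hg : g = l1hat ^ 2 + l1hat * (y - 3 * l2hat - 2 * l1) + 2 * l1 * l2hat) :
    |w1 * l1hat - l1| < |l1hat - l1| ↔ (y - l1hat - l2hat) * g < 0 := by
  have hd : l1hat - l2hat ≠ 0 := sub_ne_zero.mpr hne
  have hd2 : (l1hat - l2hat) ^ 2 > 0 := by positivity
  have key : (w1 * l1hat - l1) ^ 2 - (l1hat - l1) ^ 2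
      = (y - l1hat - l2hat) * g * l1hat / (l1hat - l2hat) ^ 2 := by
    subst hw hg
    field_simp
    ring
  have hsq : |w1 * l1hat - l1| < |l1hat - l1| ↔
      (w1 * l1hat - l1) ^ 2 < (l1hat - l1) ^ 2 := by
    rw [← sq_abs (w1 * l1hat - l1), ← sq_abs (l1hat - l1)]
    exact (pow_lt_pow_iff_left₀ (abs_nonneg _) (abs_nonneg _) two_ne_zero).symm
  rw [hsq]
  constructor
  · intro h
    have h2 : (y - l1hat - l2hat) * g * l1hat / (l1hat - l2hat) ^ 2 < 0 := by linarith
    have h3 : (y - l1hat - l2hat) * g * l1hat < 0 := by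
      have := (div_neg_iff).mp h2
      rcases this with ⟨h4, h5⟩ | ⟨h4, h5⟩
      · linarith
      · exact h4
    nlinarith
  · intro h
    have h3 : (y - l1hat - l2hat) * g * l1hat < 0 := by nlinarith
    have h2 : (y - l1hat - l2hat) * g * l1hat / (l1hat - l2hat) ^ 2 < 0 :=
      div_neg_of_neg_of_pos h3 hd2
    linarith
end

section
/- Let $y, \hat{l}_1, \hat{l}_2, l_2$ be real with $\hat{l}_1 \neq \hat{l}_2$, $\hat{l}_2 > 0$, and let $w_2^* = 2 - (y - 2\hat{l}_2)/(\hat{l}_1 - \hat{l}_2) = (2\hat{l}_1 - y)/(\hat{l}_1 - \hat{l}_2)$ and $g(\hat{l}_2) = \hat{l}_2^2 + \hat{l}_2(y - 3\hat{l}_1 - 2l_2) + 2 l_2 \hat{l}_1$. Then $|w_2^*\hat{l}_2 - l_2| < |\hat{l}_2 - l_2|$ if and only if $(y - \hat{l}_1 - \hat{l}_2)\, g(\hat{l}_2) < 0$. -/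
theorem stmt_8 (y l1hat l2hat l2 : ℝ) (hne : l1hat ≠ l2hat) (hpos : l2hat > 0)
    (w2 g : ℝ) (hw : w2 = (2 * l1hat - y) / (l1hat - l2hat))
    (hg : g = l2hat ^ 2 + l2hat * (y - 3 * l1hat - 2 * l2) + 2 * l2 * l1hat) :
    |w2 * l2hat - l2| < |l2hat - l2| ↔ (y - l1hat - l2hat) * g < 0 := by
  have hd : l1hat - l2hat ≠ 0 := sub_ne_zero.mpr hne
  have hd2 : (0:ℝ) < (l1hat - l2hat)^2 := by positivity
  have key : (l2hat - l2)^2 - (w2 * l2hat - l2)^2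
      = l2hat * (-((y - l1hat - l2hat) * g)) / (l1hat - l2hat)^2 := by
    subst hw hg; field_simp; ring
  rw [← sq_abs (w2 * l2hat - l2), ← sq_abs (l2hat - l2)] at key
  constructor
  · intro h
    have h2 : |w2 * l2hat - l2|^2 < |l2hat - l2|^2 := by
      have := abs_nonneg (w2 * l2hat - l2)
      nlinarith
    have hq : (0:ℝ) < l2hat * (-((y - l1hat - l2hat) * g)) / (l1hat - l2hat)^2 := by
      linarith
    have hnum : (0:ℝ) < l2hat * (-((y - l1hat - l2hat) * g)) := by
      by_contra hle
      push_neg at hle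
      have := div_nonpos_of_nonpos_of_nonneg hle hd2.le
      linarith
    nlinarith
  · intro h
    have hnum : (0:ℝ) < l2hat * (-((y - l1hat - l2hat) * g)) := by nlinarith
    have h2 : |w2 * l2hat - l2|^2 < |l2hat - l2|^2 := by
      have : (0:ℝ) < l2hat * (-((y - l1hat - l2hat) * g)) / (l1hat - l2hat)^2 :=
        div_pos hnum hd2
      linarith [key]
    exact lt_of_pow_lt_pow_left₀ 2 (abs_nonneg _) h2
end

section
/- Let $l_1, l_2, \hat{l}_1, \hat{l}_2 > 0$ with $y = l_1 + l_2$, $\hat{l}_1 > \hat{l}_2$, and $\frac{l_1+l_2}{2} < \hat{l}_1 < l_1$. Define $g(x) = x^2 + x(y - 3\hat{l}_1 - 2l_2) + 2 l_2 \hat{l}_1$. Then $g(l_2) > 0$ and $g(y - \hat{l}_1) < 0$, hence there exists a unique $l_{20}^* \in (l_2, y - \hat{l}_1)$ with $g(l_{20}^*) = 0$, and moreover $y - \hat{l}_1 < \frac{l_1 + l_2}{2}$. -/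
theorem stmt_10 (l1 l2 l1hat l2hat y : ℝ)
    (h1 : l1 > 0) (h2 : l2 > 0) (h3 : l1hat > 0) (h4 : l2hat > 0)
    (hy : y = l1 + l2) (hord : l1hat > l2hat)
    (hlo : (l1 + l2) / 2 < l1hat) (hhi : l1hat < l1)
    (g : ℝ → ℝ) (hg : ∀ x, g x = x ^ 2 + x * (y - 3 * l1hat - 2 * l2) + 2 * l2 * l1hat) :
    g l2 > 0 ∧ g (y - l1hat) < 0 ∧
    (∃! x, x ∈ Set.Ioo l2 (y - l1hat) ∧ g x = 0) ∧
    y - l1hat < (l1 + l2) / 2 := by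
  have hgl2 : g l2 > 0 := by rw [hg]; nlinarith
  have hga : g (y - l1hat) < 0 := by rw [hg]; nlinarith
  have hlt : l2 < y - l1hat := by linarith
  refine ⟨hgl2, hga, ?_, by linarith⟩
  have hcont : ContinuousOn g (Set.Icc l2 (y - l1hat)) := by
    have : g = fun x => x ^ 2 + x * (y - 3 * l1hat - 2 * l2) + 2 * l2 * l1hat :=
      funext hg
    rw [this]; fun_prop
  have hiv := intermediate_value_Ioo' (le_of_lt hlt) hcont
  have h0 : (0 : ℝ) ∈ Set.Ioo (g (y - l1hat)) (g l2) := ⟨hga, hgl2⟩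
  obtain ⟨x, hxmem, hx0⟩ := hiv h0
  refine ⟨x, ⟨hxmem, hx0⟩, ?_⟩
  rintro x' ⟨⟨hx'1, hx'2⟩, hx'0⟩
  obtain ⟨hx1, hx2⟩ := hxmem
  by_contra hne
  have hd : x' - x ≠ 0 := sub_ne_zero.mpr hne
  rw [hg] at hx0 hx'0
  have hsum : x + x' = 3 * l1hat + 2 * l2 - y := by
    have := mul_self_nonneg (x' - x)
    have h := sub_eq_zero.mpr (hx'0.trans hx0.symm)
    have hfac : (x' - x) * (x' + x + (y - 3 * l1hat - 2 * l2)) = 0 := by ring_nf; nlinarith [hx0, hx'0]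
    rcases mul_eq_zero.mp hfac with h | h
    · exact absurd h hd
    · linarith
  have hprod : x * x' = 2 * l2 * l1hat := by nlinarith [hx0]
  have : g (y - l1hat) = (y - l1hat - x) * (y - l1hat - x') := by
    rw [hg]; nlinarith [hsum, hprod]
  nlinarith [mul_pos (sub_pos.mpr hx2) (sub_pos.mpr hx'2)]
end

section
/- Let $\hat{l}_1, \hat{l}_2 > 0$ and real numbers $l_1, l_2$ with $y = l_1 + l_2$, $\hat{l}_1 \neq \hat{l}_2$, and let $w^* = (y - 2\hat{l}_2)/(\hat{l}_1 - \hat{l}_2)$, $w_2^* = 2 - w^*$. If both components are under-estimated, i.e. $\hat{l}_1 < l_1$ and $\hat{l}_2 < l_2$, or both over-estimated, i.e. $\hat{l}_1 > l_1$ and $\hat{l}_2 > l_2$, then it is impossible that simultaneously $|w^*\hat{l}_1 - l_1| < |\hat{l}_1 - l_1|$ and $|w_2^*\hat{l}_2 - l_2| < |\hat{l}_2 - l_2|$. -/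
theorem stmt_16 (l1 l2 l1hat l2hat y wstar w2star : ℝ)
    (h1 : l1hat > 0) (h2 : l2hat > 0) (hy : y = l1 + l2) (hne : l1hat ≠ l2hat)
    (hw : wstar = (y - 2 * l2hat) / (l1hat - l2hat)) (hw2 : w2star = 2 - wstar)
    (hsame : (l1hat < l1 ∧ l2hat < l2) ∨ (l1hat > l1 ∧ l2hat > l2)) :
    ¬(|wstar * l1hat - l1| < |l1hat - l1| ∧ |w2star * l2hat - l2| < |l2hat - l2|) := by
  rintro ⟨ha, hb⟩
  have ha1 := neg_abs_le (wstar * l1hat - l1)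
  have ha2 := le_abs_self (wstar * l1hat - l1)
  have hb1 := neg_abs_le (w2star * l2hat - l2)
  have hb2 := le_abs_self (w2star * l2hat - l2)
  rcases hsame with ⟨hA, hB⟩ | ⟨hA, hB⟩
  · rw [abs_of_neg (by linarith : l1hat - l1 < 0)] at ha
    rw [abs_of_neg (by linarith : l2hat - l2 < 0)] at hb
    -- wstar*l1hat > l1hat and w2star*l2hat > l2hat
    have k1 : (wstar - 1) * l1hat > 0 := by nlinarith
    have k2 : (1 - wstar) * l2hat > 0 := by nlinarith [hw2]
    nlinarith [k1, k2]
  · rw [abs_of_pos (by linarith : l1hat - l1 > 0)] at ha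
    rw [abs_of_pos (by linarith : l2hat - l2 > 0)] at hb
    have k1 : (wstar - 1) * l1hat < 0 := by nlinarith
    have k2 : (1 - wstar) * l2hat < 0 := by nlinarith [hw2]
    nlinarith [k1, k2]
end
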